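/- If s is an adult digit string (all digits ≥ 4) with every run length at most 9, then every run length of Z(s) is at most 3 (i.e., no digit appears more than 3 consecutive times in Z(s)). -/

import Mathlib

/-- Run-length encoding of a digit string. -/
def rle : List ℕ → List (ℕ × ℕ)
  | [] => []
  | a :: t =>
    match rle t with
    | [] => [(a, 1)]
    | (b, n) :: r => if a = b then (b, n + 1) :: r else (a, 1) :: (b, n) :: r

/-- The "look-and-say-the-biggest" map: each maximal run of the digit `a` of length `n`
is replaced by the decimal digits of `max n a` followed by the digit `a`.
(When `n ≤ 9` this is just the two digits `max n a`, `a`.) -/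
def Z (s : List ℕ) : List ℕ :=
  ((rle s).map fun p => (Nat.digits 10 (max p.2 p.1)).reverse ++ [p.1]).flatten

/-- `r` is a run-length representation of the digit string `s`: all run lengths are
positive, consecutive base digits differ, and the expansion of `r` equals `s`. -/
def IsRLE (r : List (ℕ × ℕ)) (s : List ℕ) : Prop :=
  (∀ p ∈ r, 1 ≤ p.2) ∧ (r.map Prod.fst).Chain' (· ≠ ·) ∧
    (r.map fun p => List.replicate p.2 p.1).flatten = s

lemma rle_fst_mem : ∀ (s : List ℕ) (p : ℕ × ℕ), p ∈ rle s → p.1 ∈ s := by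
  intro s
  induction s with
  | nil => simp [rle]
  | cons a t ih =>
    intro p hp
    simp only [rle] at hp
    rcases h : rle t with _ | ⟨⟨b, n⟩, r⟩
    · rw [h] at hp
      simp at hp
      simp [hp]
    · rw [h] at hp
      by_cases hab : a = b
      · simp [hab] at hp
        rcases hp with hp | hp
        · have : ((b, n) : ℕ × ℕ).1 ∈ t := ih _ (h ▸ List.mem_cons_self)
          subst hp
          exact List.mem_cons_of_mem _ this
        · exact List.mem_cons_of_mem _ (ih _ (h ▸ List.mem_cons_of_mem _ hp))
      · simp [hab] at hp
        rcases hp with hp | hp | hp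
        · subst hp; exact List.mem_cons_self
        · have : ((b, n) : ℕ × ℕ).1 ∈ t := ih _ (h ▸ List.mem_cons_self)
          subst hp
          exact List.mem_cons_of_mem _ this
        · exact List.mem_cons_of_mem _ (ih _ (h ▸ List.mem_cons_of_mem _ hp))

lemma rle_chain : ∀ (s : List ℕ), ((rle s).map Prod.fst).Chain' (· ≠ ·) := by
  intro s
  induction s with
  | nil => simp [rle, List.Chain', List.isChain_nil]
  | cons a t ih =>
    simp only [rle]
    rcases h : rle t with _ | ⟨⟨b, n⟩, r⟩
    · simp [List.Chain', List.isChain_singleton]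
    · rw [h] at ih
      by_cases hab : a = b
      · simpa [hab] using ih
      · simp only [if_neg hab, List.map_cons]
        exact List.isChain_cons_cons.2 ⟨hab, ih⟩

lemma rle_pair (x y : ℕ) : rle [x, y] = if x = y then [(y, 2)] else [(x, 1), (y, 1)] := by
  simp [rle]

lemma rle_cons_eq (x : ℕ) {t : List ℕ} {b k : ℕ} {r : List (ℕ × ℕ)} (h : rle t = (b, k) :: r) :
    rle (x :: t) = if x = b then (b, k + 1) :: r else (x, 1) :: (b, k) :: r := by
  simp [rle, h]

/-- Key combinatorial lemma. -/
lemma key : ∀ (L : List (ℕ × ℕ)), (L.map Prod.fst).Chain' (· ≠ ·) →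
    (∀ p ∈ rle ((L.map fun p => [max p.2 p.1, p.1]).flatten), p.2 ≤ 3) ∧
    (∀ a n rest, L = (a, n) :: rest →
      ∃ b k r, rle ((L.map fun p => [max p.2 p.1, p.1]).flatten) = (b, k) :: r ∧
        k ≤ 3 ∧ (2 ≤ k → b = a)) := by
  intro L
  induction L with
  | nil => simp [rle]
  | cons p rest ih =>
    obtain ⟨a₀, n₀⟩ := p
    intro hch
    rcases rest with _ | ⟨⟨a, n⟩, rest'⟩
    · -- base case: single pair
      have he : (([(a₀, n₀)].map fun p => [max p.2 p.1, p.1]).flatten) = [max n₀ a₀, a₀] := by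
        simp
      rw [he, rle_pair]
      by_cases hma : max n₀ a₀ = a₀
      · refine ⟨?_, ?_⟩
        · intro q hq; simp [hma] at hq; simp [hq]
        · intro a' n' rest' heq
          rw [List.cons.injEq, Prod.mk.injEq] at heq
          obtain ⟨⟨rfl, rfl⟩, rfl⟩ := heq
          exact ⟨a₀, 2, [], by simp [hma], by omega, fun _ => rfl⟩
      · refine ⟨?_, ?_⟩
        · intro q hq; simp [hma] at hq; rcases hq with hq | hq <;> simp [hq]
        · intro a' n' rest' heq
          exact ⟨max n₀ a₀, 1, [(a₀, 1)], by simp [hma], by omega, by omega⟩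
    · -- inductive step
      have hch' : (((a, n) :: rest').map Prod.fst).Chain' (· ≠ ·) :=
        (List.isChain_cons_cons.1 hch).2
      have hne : a₀ ≠ a := (List.isChain_cons_cons.1 hch).1
      obtain ⟨ihcnt, ihhd⟩ := ih hch'
      obtain ⟨b, k, r, hbr, hk3, hk2⟩ := ihhd a n rest' rfl
      set t := (((a, n) :: rest').map fun p => [max p.2 p.1, p.1]).flatten with ht
      have he : ((((a₀, n₀) :: (a, n) :: rest').map fun p => [max p.2 p.1, p.1]).flatten)
          = max n₀ a₀ :: a₀ :: t := by
        simp [ht]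
      rw [he]
      set m₀ := max n₀ a₀ with hm₀
      have hrt : ∀ q ∈ r, q.2 ≤ 3 := fun q hq => ihcnt q (hbr ▸ List.mem_cons_of_mem _ hq)
      have hbk : ((b, k) : ℕ × ℕ).2 ≤ 3 := ihcnt _ (hbr ▸ List.mem_cons_self)
      by_cases hab : a₀ = b
      · have hk1 : k ≤ 1 := by
          by_contra hk
          exact hne (hab.trans (hk2 (by omega)))
        have h1 : rle (a₀ :: t) = (b, k + 1) :: r := by
          rw [rle_cons_eq a₀ hbr, if_pos hab]
        by_cases hmb : m₀ = b
        · have h2 : rle (m₀ :: a₀ :: t) = (b, k + 2) :: r := by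
            rw [rle_cons_eq m₀ h1, if_pos hmb]
          refine ⟨?_, ?_⟩
          · intro q hq
            rw [h2] at hq
            rcases List.mem_cons.1 hq with hq | hq
            · simp [hq]; omega
            · exact hrt q hq
          · intro a' n' rest'' heq
            rw [List.cons.injEq, Prod.mk.injEq] at heq
            obtain ⟨⟨rfl, rfl⟩, rfl⟩ := heq
            exact ⟨b, k + 2, r, h2, by omega, fun _ => hab.symm⟩
        · have h2 : rle (m₀ :: a₀ :: t) = (m₀, 1) :: (b, k + 1) :: r := by
            rw [rle_cons_eq m₀ h1, if_neg hmb]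
          refine ⟨?_, ?_⟩
          · intro q hq
            rw [h2] at hq
            rcases List.mem_cons.1 hq with hq | hq
            · simp [hq]
            rcases List.mem_cons.1 hq with hq | hq
            · simp [hq]; omega
            · exact hrt q hq
          · intro a' n' rest'' heq
            exact ⟨m₀, 1, (b, k + 1) :: r, h2, by omega, by omega⟩
      · have h1 : rle (a₀ :: t) = (a₀, 1) :: (b, k) :: r := by
          rw [rle_cons_eq a₀ hbr, if_neg hab]
        by_cases hma : m₀ = a₀
        · have h2 : rle (m₀ :: a₀ :: t) = (a₀, 2) :: (b, k) :: r := by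
            rw [rle_cons_eq m₀ h1, if_pos hma]
          refine ⟨?_, ?_⟩
          · intro q hq
            rw [h2] at hq
            rcases List.mem_cons.1 hq with hq | hq
            · simp [hq]
            rcases List.mem_cons.1 hq with hq | hq
            · simp [hq]; exact hbk
            · exact hrt q hq
          · intro a' n' rest'' heq
            rw [List.cons.injEq, Prod.mk.injEq] at heq
            obtain ⟨⟨rfl, rfl⟩, rfl⟩ := heq
            exact ⟨a₀, 2, (b, k) :: r, h2, by omega, fun _ => rfl⟩
        · have h2 : rle (m₀ :: a₀ :: t) = (m₀, 1) :: (a₀, 1) :: (b, k) :: r := by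
            rw [rle_cons_eq m₀ h1, if_neg hma]
          refine ⟨?_, ?_⟩
          · intro q hq
            rw [h2] at hq
            rcases List.mem_cons.1 hq with hq | hq
            · simp [hq]
            rcases List.mem_cons.1 hq with hq | hq
            · simp [hq]
            rcases List.mem_cons.1 hq with hq | hq
            · simp [hq]; exact hbk
            · exact hrt q hq
          · intro a' n' rest'' heq
            exact ⟨m₀, 1, (a₀, 1) :: (b, k) :: r, h2, by omega, by omega⟩

/-- For an adult string with run lengths ≤ 9, every run of `Z(s)` has length at most 3. -/
theorem Z_adult_runs_le_three (s : List ℕ) (hdig : ∀ d ∈ s, d ≤ 9)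
    (hadult : ∀ d ∈ s, 4 ≤ d) (hrun : ∀ p ∈ rle s, p.2 ≤ 9) :
    ∀ p ∈ rle (Z s), p.2 ≤ 3 := by
  have hZ : Z s = (((rle s).map fun p => [max p.2 p.1, p.1]).flatten) := by
    unfold Z
    congr 1
    apply List.map_congr_left
    intro p hp
    have h1 : p.1 ∈ s := rle_fst_mem s p hp
    have h4 : 4 ≤ p.1 := hadult _ h1
    have h9 : p.1 ≤ 9 := hdig _ h1
    have hn9 : p.2 ≤ 9 := hrun _ hp
    set m := max p.2 p.1 with hm
    have hmlt : m < 10 := by omega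
    have hmpos : 0 < m := by omega
    have hd : Nat.digits 10 m = [m] := by
      rw [Nat.digits_def' (by norm_num : 1 < 10) hmpos, Nat.mod_eq_of_lt hmlt,
        Nat.div_eq_of_lt hmlt]
      simp
    rw [hd]
    simp
  rw [hZ]
  exact (key (rle s) (rle_chain s)).1
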